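/- For every digraph G and every q ≥ 3: g(G,q) ≥ h(G,q) ≥ g(G,q−1)·log_q(q−1) ≥ g(G,q) − n·log_q(1 + 1/(q−1)), where n is the number of vertices of G. -/
import Mathlib


/-- Arc `(u,i)` of the interaction graph of a coding function `f`. -/
def arcCF {V A : Type*} [DecidableEq V] (f : (V → A) → V → A) (u i : V) : Prop :=
  ∃ (x : V → A) (a : A), f (Function.update x u a) i ≠ f x i

/-- Maximum number of fixed points of a coding function over an alphabet of size `q`
whose interaction graph is a subgraph of `G`; `g(G,q)` is its `log_q`. -/
noncomputable def maxFixSub {V : Type*} [Fintype V] [DecidableEq V]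
    (G : V → V → Prop) (q : ℕ) : ℕ :=
  sSup {n : ℕ | ∃ f : (V → Fin q) → V → Fin q,
    (∀ u i, arcCF f u i → G u i) ∧ n = Set.ncard {x | f x = x}}

/-- Maximum number of fixed points of a coding function over an alphabet of size `q`
whose interaction graph is exactly `G`; `h(G,q)` is its `log_q`. -/
noncomputable def maxFixEq {V : Type*} [Fintype V] [DecidableEq V]
    (G : V → V → Prop) (q : ℕ) : ℕ :=
  sSup {n : ℕ | ∃ f : (V → Fin q) → V → Fin q,
    (∀ u i, arcCF f u i ↔ G u i) ∧ n = Set.ncard {x | f x = x}}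

section Aux

variable {V : Type*} [Fintype V] [DecidableEq V]

private lemma arcCF_not {A : Type*} {f : (V → A) → V → A} {u i : V}
    (h : ¬ arcCF f u i) (x : V → A) (a : A) :
    f (Function.update x u a) i = f x i := by
  by_contra hne; exact h ⟨x, a, hne⟩

private lemma eq_of_agree_aux {A : Type*} (f : (V → A) → V → A) (i : V) :
    ∀ (s : Finset V) (x y : V → A), (∀ u, x u ≠ y u → u ∈ s) →
      (∀ u, arcCF f u i → x u = y u) → f x i = f y i := by
  intro s
  induction s using Finset.induction_on with
  | empty =>
      intro x y hs _
      have hxy : x = y := funext fun u => by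
        by_contra h; exact absurd (hs u h) (Finset.notMem_empty u)
      rw [hxy]
  | @insert a s ha ih =>
      intro x y hs harc
      set x' := Function.update x a (y a) with hx'
      have h1 : f x i = f x' i := by
        by_cases hc : arcCF f a i
        · have hxy : x a = y a := harc a hc
          have hx'x : x' = x := by rw [hx', ← hxy]; exact Function.update_eq_self a x
          rw [hx'x]
        · exact (arcCF_not hc x (y a)).symm
      have h2 : f x' i = f y i := by
        apply ih x' y
        · intro u hu
          by_cases hua : u = a
          · subst hua
            rw [hx', Function.update_self] at hu
            exact absurd rfl hu
          · rw [hx', Function.update_of_ne hua] at hu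
            rcases Finset.mem_insert.mp (hs u hu) with h | h
            · exact absurd h hua
            · exact h
        · intro u hu
          by_cases hua : u = a
          · subst hua; rw [hx', Function.update_self]
          · rw [hx', Function.update_of_ne hua]
            exact harc u hu
      exact h1.trans h2

private lemma eq_of_agree {A : Type*} (f : (V → A) → V → A) (i : V) (x y : V → A)
    (h : ∀ u, arcCF f u i → x u = y u) : f x i = f y i :=
  eq_of_agree_aux f i Finset.univ x y (fun u _ => Finset.mem_univ u) h

private lemma ncard_fix_le (q : ℕ) (f : (V → Fin q) → V → Fin q) :
    Set.ncard {x | f x = x} ≤ Fintype.card (V → Fin q) := by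
  have h := Set.ncard_le_ncard (Set.subset_univ {x | f x = x}) Set.finite_univ
  simpa [Set.ncard_univ, Nat.card_eq_fintype_card] using h

private lemma bddSub (G : V → V → Prop) (q : ℕ) :
    BddAbove {n : ℕ | ∃ f : (V → Fin q) → V → Fin q,
      (∀ u i, arcCF f u i → G u i) ∧ n = Set.ncard {x | f x = x}} :=
  ⟨Fintype.card (V → Fin q), by rintro n ⟨f, -, rfl⟩; exact ncard_fix_le q f⟩

private lemma bddEq (G : V → V → Prop) (q : ℕ) :
    BddAbove {n : ℕ | ∃ f : (V → Fin q) → V → Fin q,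
      (∀ u i, arcCF f u i ↔ G u i) ∧ n = Set.ncard {x | f x = x}} :=
  ⟨Fintype.card (V → Fin q), by rintro n ⟨f, -, rfl⟩; exact ncard_fix_le q f⟩

private lemma one_mem_sub (G : V → V → Prop) (k : ℕ) :
    1 ∈ {n : ℕ | ∃ f : (V → Fin (k+1)) → V → Fin (k+1),
      (∀ u i, arcCF f u i → G u i) ∧ n = Set.ncard {x | f x = x}} := by
  refine ⟨fun _ _ => 0, fun u i h => ?_, ?_⟩
  · obtain ⟨x, a, hne⟩ := h; exact absurd rfl hne
  · have hset : {x : V → Fin (k+1) | (fun _ => (0 : Fin (k+1))) = x}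
        = {fun _ => (0 : Fin (k+1))} := by
      ext x; simp [eq_comm]
    rw [show {x : V → Fin (k+1) | (fun _ _ => (0 : Fin (k+1))) x = x}
        = {x : V → Fin (k+1) | (fun _ => (0 : Fin (k+1))) = x} from rfl, hset,
      Set.ncard_singleton]

private lemma nonemptySub (G : V → V → Prop) (k : ℕ) :
    Set.Nonempty {n : ℕ | ∃ f : (V → Fin (k+1)) → V → Fin (k+1),
      (∀ u i, arcCF f u i → G u i) ∧ n = Set.ncard {x | f x = x}} :=
  ⟨1, one_mem_sub G k⟩

/-- Construction: from a coding function over `m+2` letters with interaction graph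
contained in `G`, get one over `m+3` letters with interaction graph exactly `G` and
at least as many fixed points. -/
private lemma exists_realize (G : V → V → Prop) (m : ℕ)
    (f : (V → Fin (m+2)) → V → Fin (m+2)) (hfsub : ∀ u i, arcCF f u i → G u i) :
    ∃ f' : (V → Fin (m+3)) → V → Fin (m+3),
      (∀ u i, arcCF f' u i ↔ G u i) ∧
      Set.ncard {x | f x = x} ≤ Set.ncard {x | f' x = x} := by
  classical
  set top : Fin (m+3) := Fin.last (m+2) with htop
  set π : Fin (m+3) → Fin (m+2) := fun a => if h : (a : ℕ) < m + 2 then ⟨a, h⟩ else 0 with hπdef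
  have hπ : ∀ b : Fin (m+2), π (Fin.castSucc b) = b := by
    intro b
    have hb : ((Fin.castSucc b : Fin (m+3)) : ℕ) < m + 2 := b.isLt
    simp only [hπdef, dif_pos hb]
    exact Fin.ext rfl
  have hcs_ne_top : ∀ z : Fin (m+2), Fin.castSucc z ≠ top := by
    intro z h
    have := congrArg Fin.val h
    simp only [Fin.coe_castSucc, htop, Fin.val_last] at this
    omega
  set C : (V → Fin (m+3)) → V → Prop := fun x i => ∃ u, G u i ∧ x u = top with hC
  set f' : (V → Fin (m+3)) → V → Fin (m+3) := fun x i =>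
    if C x i then top else Fin.castSucc (f (fun v => π (x v)) i) with hf'
  refine ⟨f', ?_, ?_⟩
  · intro u i
    constructor
    · rintro ⟨x, a, hne⟩
      by_contra hG
      apply hne
      have hCeq : C (Function.update x u a) i ↔ C x i := by
        constructor
        · rintro ⟨u', hu', hx⟩
          have hu'u : u' ≠ u := fun h => hG (h ▸ hu')
          exact ⟨u', hu', by rwa [Function.update_of_ne hu'u] at hx⟩
        · rintro ⟨u', hu', hx⟩
          have hu'u : u' ≠ u := fun h => hG (h ▸ hu')
          exact ⟨u', hu', by rwa [Function.update_of_ne hu'u]⟩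
      have hfeq : f (fun v => π (Function.update x u a v)) i = f (fun v => π (x v)) i := by
        apply eq_of_agree
        intro u' hu'
        have hu'u : u' ≠ u := fun h => hG (h ▸ hfsub u' i hu')
        rw [Function.update_of_ne hu'u]
      by_cases h : C x i
      · simp only [hf', if_pos h, if_pos (hCeq.mpr h)]
      · simp only [hf', if_neg h, if_neg (fun hh => h (hCeq.mp hh)), hfeq]
    · intro hG
      refine ⟨fun _ => Fin.castSucc 0, top, ?_⟩
      have h1 : C (Function.update (fun _ : V => Fin.castSucc (0 : Fin (m+2))) u top) i :=
        ⟨u, hG, Function.update_self _ _ _⟩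
      have h2 : ¬ C (fun _ : V => Fin.castSucc (0 : Fin (m+2))) i := by
        rintro ⟨u', -, hx⟩
        exact hcs_ne_top 0 hx
      simp only [hf', if_pos h1, if_neg h2]
      exact fun h => hcs_ne_top _ h.symm
  · apply Set.ncard_le_ncard_of_injOn (fun y v => Fin.castSucc (y v))
    · intro y hy
      simp only [Set.mem_setOf_eq] at hy ⊢
      funext i
      have h2 : ¬ C (fun v => Fin.castSucc (y v)) i := by
        rintro ⟨u', -, hx⟩
        exact hcs_ne_top _ hx
      simp only [hf', if_neg h2]
      have hπy : (fun v => π (Fin.castSucc (y v))) = y := funext fun v => hπ (y v)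
      rw [hπy, congrFun hy i]
    · intro y _ y' _ h
      funext v
      exact Fin.castSucc_injective _ (congrFun h v)

private lemma maxFixSub_le_maxFixEq (G : V → V → Prop) (m : ℕ) :
    maxFixSub G (m+2) ≤ maxFixEq G (m+3) := by
  classical
  obtain ⟨f, hfsub, hfcard⟩ :=
    Nat.sSup_mem (nonemptySub G (m+1)) (bddSub G (m+2))
  obtain ⟨f', hf'arc, hf'fix⟩ := exists_realize G m f hfsub
  have hmem : Set.ncard {x | f' x = x} ∈ {n : ℕ | ∃ g : (V → Fin (m+3)) → V → Fin (m+3),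
      (∀ u i, arcCF g u i ↔ G u i) ∧ n = Set.ncard {x | g x = x}} := ⟨f', hf'arc, rfl⟩
  calc maxFixSub G (m+2) = Set.ncard {x | f x = x} := hfcard
    _ ≤ Set.ncard {x | f' x = x} := hf'fix
    _ ≤ maxFixEq G (m+3) := le_csSup (bddEq G (m+3)) hmem

private lemma maxFixEq_le_maxFixSub (G : V → V → Prop) (m : ℕ) :
    maxFixEq G (m+3) ≤ maxFixSub G (m+3) := by
  apply csSup_le_csSup (bddSub G (m+3))
  · obtain ⟨f', hf'arc, -⟩ := exists_realize G m (fun _ _ => 0)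
      (fun u i h => absurd rfl h.choose_spec.choose_spec)
    exact ⟨Set.ncard {x | f' x = x}, f', hf'arc, rfl⟩
  · rintro n ⟨f, hf, rfl⟩
    exact ⟨f, fun u i h => (hf u i).mp h, rfl⟩

private lemma key_count (G : V → V → Prop) (m : ℕ) :
    maxFixSub G (m+3) * (m+2) ^ (Fintype.card V)
      ≤ maxFixSub G (m+2) * (m+3) ^ (Fintype.card V) := by
  classical
  set n := Fintype.card V with hn
  obtain ⟨f, hfsub, hfcard⟩ :=
    Nat.sSup_mem (nonemptySub G (m+2)) (bddSub G (m+3))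
  set F : Finset (V → Fin (m+3)) := Finset.univ.filter (fun x => f x = x) with hF
  have hFcard : Set.ncard {x | f x = x} = F.card := by
    rw [← Set.ncard_coe_finset]
    congr 1
    ext x; simp [hF]
  have h2 : ∀ x : V → Fin (m+3),
      (Finset.univ.filter (fun c : V → Fin (m+3) => ∀ v, x v ≠ c v))
        = Fintype.piFinset (fun v => Finset.univ.erase (x v)) := by
    intro x; ext c
    simp [Fintype.mem_piFinset, ne_comm]
  have hsum : ∑ c : V → Fin (m+3), (F.filter (fun x => ∀ v, x v ≠ c v)).card
      = F.card * (m+2) ^ n := by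
    calc ∑ c : V → Fin (m+3), (F.filter (fun x => ∀ v, x v ≠ c v)).card
        = ∑ c : V → Fin (m+3), ∑ x ∈ F, if ∀ v, x v ≠ c v then 1 else 0 :=
          Finset.sum_congr rfl fun c _ => Finset.card_filter _ _
      _ = ∑ x ∈ F, ∑ c : V → Fin (m+3), if ∀ v, x v ≠ c v then 1 else 0 :=
          Finset.sum_comm
      _ = ∑ x ∈ F, (Finset.univ.filter (fun c : V → Fin (m+3) => ∀ v, x v ≠ c v)).card :=
          Finset.sum_congr rfl fun x _ => (Finset.card_filter _ _).symm
      _ = ∑ _x ∈ F, (m+2) ^ n := by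
          refine Finset.sum_congr rfl (fun x _ => ?_)
          rw [h2 x, Fintype.card_piFinset]
          simp [Finset.card_erase_of_mem, hn]
      _ = F.card * (m+2) ^ n := by rw [Finset.sum_const, smul_eq_mul]
  have hex : ∃ c : V → Fin (m+3),
      F.card * (m+2) ^ n ≤ (F.filter (fun x => ∀ v, x v ≠ c v)).card * (m+3) ^ n := by
    by_contra hcon
    push_neg at hcon
    have hlt := Finset.sum_lt_sum_of_nonempty
      (Finset.univ_nonempty (α := V → Fin (m+3))) (fun c _ => hcon c)
    rw [← Finset.sum_mul, hsum, Finset.sum_const, Finset.card_univ, smul_eq_mul,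
      Fintype.card_fun, Fintype.card_fin] at hlt
    rw [show (m+3) ^ n * (F.card * (m+2) ^ n) = F.card * (m+2) ^ n * (m+3) ^ n from by ring]
      at hlt
    exact lt_irrefl _ hlt
  obtain ⟨c, hc⟩ := hex
  set r : ∀ _ : V, Fin (m+3) → Fin (m+2) := fun v a =>
    if h : ∃ b, (c v).succAbove b = a then h.choose else 0 with hr
  have hre : ∀ v b, r v ((c v).succAbove b) = b := by
    intro v b
    have h : ∃ b', (c v).succAbove b' = (c v).succAbove b := ⟨b, rfl⟩
    simp only [hr, dif_pos h]
    exact Fin.succAbove_right_injective h.choose_spec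
  have her : ∀ v a, a ≠ c v → (c v).succAbove (r v a) = a := by
    intro v a ha
    have h : ∃ b, (c v).succAbove b = a := Fin.exists_succAbove_eq ha
    simp only [hr, dif_pos h]
    exact h.choose_spec
  set g : (V → Fin (m+2)) → V → Fin (m+2) :=
    fun y i => r i (f (fun v => (c v).succAbove (y v)) i) with hg
  have hgsub : ∀ u i, arcCF g u i → G u i := by
    intro u i h
    by_contra hG
    obtain ⟨y, a, hne⟩ := h
    apply hne
    simp only [hg]
    congr 1
    apply eq_of_agree
    intro u' hu'
    have hu'u : u' ≠ u := fun h' => hG (h' ▸ hfsub u' i hu')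
    rw [Function.update_of_ne hu'u]
  have hgfix : (F.filter (fun x => ∀ v, x v ≠ c v)).card ≤ Set.ncard {y | g y = y} := by
    rw [← Set.ncard_coe_finset]
    apply Set.ncard_le_ncard_of_injOn (fun x v => r v (x v))
    · intro x hx
      have hx2 : f x = x ∧ ∀ v, x v ≠ c v := by
        have hm := Finset.mem_coe.mp hx
        rw [Finset.mem_filter, hF, Finset.mem_filter] at hm
        exact ⟨hm.1.2, hm.2⟩
      obtain ⟨hxfix, hxne⟩ := hx2
      simp only [Set.mem_setOf_eq]
      funext i
      have hev : (fun v => (c v).succAbove (r v (x v))) = x :=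
        funext fun v => her v (x v) (hxne v)
      simp only [hg]
      rw [hev, congrFun hxfix i]
    · intro x hx x' hx' hΦ
      have hxm : f x = x ∧ ∀ v, x v ≠ c v := by
        have hm := Finset.mem_coe.mp hx
        rw [Finset.mem_filter, hF, Finset.mem_filter] at hm
        exact ⟨hm.1.2, hm.2⟩
      have hxm' : f x' = x' ∧ ∀ v, x' v ≠ c v := by
        have hm := Finset.mem_coe.mp hx'
        rw [Finset.mem_filter, hF, Finset.mem_filter] at hm
        exact ⟨hm.1.2, hm.2⟩
      funext v
      have h1 : (c v).succAbove (r v (x v)) = x v := her v (x v) (hxm.2 v)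
      have h2 : (c v).succAbove (r v (x' v)) = x' v := her v (x' v) (hxm'.2 v)
      rw [← h1, ← h2]
      exact congrArg _ (congrFun hΦ v)
  have hle : Set.ncard {y | g y = y} ≤ maxFixSub G (m+2) :=
    le_csSup (bddSub G (m+2)) ⟨g, hgsub, rfl⟩
  have hfcard' : maxFixSub G (m+3) = Set.ncard {x | f x = x} := hfcard
  calc maxFixSub G (m+3) * (m+2) ^ n = F.card * (m+2) ^ n := by rw [hfcard', hFcard]
    _ ≤ (F.filter (fun x => ∀ v, x v ≠ c v)).card * (m+3) ^ n := hc
    _ ≤ Set.ncard {y | g y = y} * (m+3) ^ n := Nat.mul_le_mul_right _ hgfix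
    _ ≤ maxFixSub G (m+2) * (m+3) ^ n := Nat.mul_le_mul_right _ hle

end Aux

/-- For every digraph `G` on `n` vertices and every `q ≥ 3`:
`g(G,q) ≥ h(G,q) ≥ g(G,q−1)·log_q(q−1) ≥ g(G,q) − n·log_q(1 + 1/(q−1))`. -/
theorem stmt13 {V : Type*} [Fintype V] [DecidableEq V] (G : V → V → Prop)
    (q : ℕ) (hq : 3 ≤ q) :
    Real.logb q (maxFixSub G q) ≥ Real.logb q (maxFixEq G q) ∧
    Real.logb q (maxFixEq G q) ≥
      Real.logb ((q : ℝ) - 1) (maxFixSub G (q - 1)) * Real.logb q ((q : ℝ) - 1) ∧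
    Real.logb ((q : ℝ) - 1) (maxFixSub G (q - 1)) * Real.logb q ((q : ℝ) - 1) ≥
      Real.logb q (maxFixSub G q) -
        (Fintype.card V : ℝ) * Real.logb q (1 + 1 / ((q : ℝ) - 1)) := by
  classical
  obtain ⟨m, rfl⟩ : ∃ m, q = m + 3 := ⟨q - 3, by omega⟩
  have hq1 : m + 3 - 1 = m + 2 := by omega
  rw [hq1]
  have hcast : ((m + 3 : ℕ) : ℝ) - 1 = ((m + 2 : ℕ) : ℝ) := by push_cast; ring
  rw [hcast]
  set n := Fintype.card V with hn
  set a := maxFixSub G (m+3) with ha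
  set b := maxFixSub G (m+2) with hb
  set e := maxFixEq G (m+3) with he
  have h1b : 1 ≤ b := le_csSup (bddSub G (m+2)) (one_mem_sub G (m+1))
  have h1a : 1 ≤ a := le_csSup (bddSub G (m+3)) (one_mem_sub G (m+2))
  have hbe : b ≤ e := maxFixSub_le_maxFixEq G m
  have hea : e ≤ a := maxFixEq_le_maxFixSub G m
  have hcount : a * (m+2) ^ n ≤ b * (m+3) ^ n := key_count G m
  have h1e : 1 ≤ e := h1b.trans hbe
  have hQ3 : (1 : ℝ) < ((m + 3 : ℕ) : ℝ) := by exact_mod_cast (by omega : 1 < m + 3)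
  have hQ2 : (1 : ℝ) < ((m + 2 : ℕ) : ℝ) := by exact_mod_cast (by omega : 1 < m + 2)
  have hlogQ : 0 < Real.log ((m + 3 : ℕ) : ℝ) := Real.log_pos hQ3
  have hlogQ2 : 0 < Real.log ((m + 2 : ℕ) : ℝ) := Real.log_pos hQ2
  have hapos : (0 : ℝ) < (a : ℝ) := by exact_mod_cast Nat.lt_of_lt_of_le Nat.zero_lt_one h1a
  have hbpos : (0 : ℝ) < (b : ℝ) := by exact_mod_cast Nat.lt_of_lt_of_le Nat.zero_lt_one h1b
  have hepos : (0 : ℝ) < (e : ℝ) := by exact_mod_cast Nat.lt_of_lt_of_le Nat.zero_lt_one h1e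
  have hident : Real.logb ((m + 2 : ℕ) : ℝ) (b : ℝ) * Real.logb ((m + 3 : ℕ) : ℝ) ((m + 2 : ℕ) : ℝ)
      = Real.logb ((m + 3 : ℕ) : ℝ) (b : ℝ) := by
    simp only [Real.logb]
    exact div_mul_div_cancel₀ (ne_of_gt hlogQ2)
  refine ⟨?_, ?_, ?_⟩
  · exact Real.logb_le_logb_of_le hQ3 hepos (by exact_mod_cast hea)
  · rw [hident]
    exact Real.logb_le_logb_of_le hQ3 hbpos (by exact_mod_cast hbe)
  · rw [hident]
    have hfrac : (1 : ℝ) + 1 / ((m + 2 : ℕ) : ℝ) = ((m + 3 : ℕ) : ℝ) / ((m + 2 : ℕ) : ℝ) := by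
      have h2 : ((m + 2 : ℕ) : ℝ) ≠ 0 := by positivity
      field_simp
      push_cast
      ring
    rw [hfrac]
    have hkey : Real.log (a : ℝ) + (n : ℝ) * Real.log ((m + 2 : ℕ) : ℝ)
        ≤ Real.log (b : ℝ) + (n : ℝ) * Real.log ((m + 3 : ℕ) : ℝ) := by
      have hcast2 : ((a * (m+2) ^ n : ℕ) : ℝ) ≤ ((b * (m+3) ^ n : ℕ) : ℝ) := by
        exact_mod_cast hcount
      push_cast at hcast2
      have hlog := Real.log_le_log (by positivity) hcast2
      rw [Real.log_mul (ne_of_gt hapos) (by positivity),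
        Real.log_mul (ne_of_gt hbpos) (by positivity),
        Real.log_pow, Real.log_pow] at hlog
      push_cast at hlog ⊢
      linarith
    simp only [Real.logb]
    rw [Real.log_div (by positivity) (by positivity)]
    rw [ge_iff_le, show Real.log (a : ℝ) / Real.log ((m + 3 : ℕ) : ℝ) -
        (n : ℝ) * ((Real.log ((m + 3 : ℕ) : ℝ) - Real.log ((m + 2 : ℕ) : ℝ)) /
          Real.log ((m + 3 : ℕ) : ℝ))
      = (Real.log (a : ℝ) + (n : ℝ) * Real.log ((m + 2 : ℕ) : ℝ)
          - (n : ℝ) * Real.log ((m + 3 : ℕ) : ℝ)) / Real.log ((m + 3 : ℕ) : ℝ) from by ring,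
      div_le_div_iff_of_pos_right hlogQ]
    linarith
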